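/- The simple graph obtained from the complete bipartite graph K_{2,3} by adding an edge between the two vertices of the part of size 2 is not an underlying push clique. -/

import Mathlib

/-- A directed graph `A` on `V` is an oriented graph: irreflexive and asymmetric. -/
def IsOriented {V : Type*} (A : V → V → Prop) : Prop :=
  (∀ v, ¬ A v v) ∧ ∀ u v, A u v → ¬ A v u

/-- `u` and `v` are adjacent in `A`. -/
def Adj {V : Type*} (A : V → V → Prop) (u v : V) : Prop :=
  A u v ∨ A v u

/-- The push of `A` by the vertex set `S`: arcs with exactly one endpoint in `S`
are reversed. -/
def push {V : Type*} (S : Set V) (A : V → V → Prop) (u v : V) : Prop :=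
  (Xor' (u ∈ S) (v ∈ S) ∧ A v u) ∨ (¬ Xor' (u ∈ S) (v ∈ S) ∧ A u v)

/-- `u` and `v` agree on `w`. -/
def AgreeOn {V : Type*} (A : V → V → Prop) (u v w : V) : Prop :=
  (A w u ∧ A w v) ∨ (A u w ∧ A v w)

/-- `u` and `v` disagree on `w`. -/
def DisagreeOn {V : Type*} (A : V → V → Prop) (u v w : V) : Prop :=
  (A u w ∧ A w v) ∨ (A w u ∧ A v w)

/-- `u` and `v` are joined by a directed 2-path in `A`. -/
def TwoPath {V : Type*} (A : V → V → Prop) (u v : V) : Prop :=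
  ∃ w, (A u w ∧ A w v) ∨ (A v w ∧ A w u)

/-- `A` is an oriented clique: any two distinct vertices are adjacent or joined
by a directed 2-path. -/
def IsOrientedClique {V : Type*} (A : V → V → Prop) : Prop :=
  ∀ u v, u ≠ v → Adj A u v ∨ TwoPath A u v

/-- `A` is a push clique: every push of `A` is an oriented clique. -/
def IsPushClique {V : Type*} (A : V → V → Prop) : Prop :=
  ∀ S : Set V, IsOrientedClique (push S A)

/-- `A` is an orientation of the simple graph `G`. -/
def IsOrientationOf {V : Type*} (A : V → V → Prop) (G : SimpleGraph V) : Prop :=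
  IsOriented A ∧ ∀ u v, Adj A u v ↔ G.Adj u v

/-- `G` is an underlying push clique. -/
def IsUnderlyingPushClique {V : Type*} (G : SimpleGraph V) : Prop :=
  ∃ A : V → V → Prop, IsOrientationOf A G ∧ IsPushClique A

/-- `G` is an underlying oriented clique. -/
def IsUnderlyingOrientedClique {V : Type*} (G : SimpleGraph V) : Prop :=
  ∃ A : V → V → Prop, IsOrientationOf A G ∧ IsOrientedClique A

lemma push_adj' {V : Type*} (S : Set V) (A : V → V → Prop) (u v : V) :
    Adj (push S A) u v ↔ Adj A u v := by
  unfold Adj push Xor' Xor; tauto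

lemma push_oriented' {V : Type*} (S : Set V) {A : V → V → Prop} (h : IsOriented A) :
    IsOriented (push S A) := by
  obtain ⟨h1, h2⟩ := h
  constructor
  · intro v; unfold push Xor'; have := h1 v; tauto
  · intro u v; unfold push Xor' Xor; have := h2 u v; have := h2 v u; tauto

/-- `K_{2,3}` together with an edge between the two vertices of the part of
size 2: two vertices are adjacent iff they are distinct and at least one of
them lies in the part of size 2. -/
theorem stmt_12 :
    ¬ IsUnderlyingPushClique
      (SimpleGraph.fromRel
        (fun u v : Fin 2 ⊕ Fin 3 => u.isLeft = true ∨ v.isLeft = true)) := by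
  classical
  rintro ⟨A, ⟨⟨hirr, hasym⟩, hadj⟩, hpush⟩
  have hAG : ∀ u v : Fin 2 ⊕ Fin 3,
      Adj A u v ↔ u ≠ v ∧ (u.isLeft = true ∨ v.isLeft = true) := by
    intro u v; rw [hadj]; simp [SimpleGraph.fromRel_adj]; tauto
  -- right–left pairs are adjacent
  have hrl : ∀ (i : Fin 3) (k : Fin 2), Adj A (.inr i) (.inl k) := by
    intro i k; rw [hAG]; simp
  -- no arcs among right vertices
  have hrr : ∀ i j : Fin 3, ¬ A (.inr i) (.inr j) := by
    intro i j h
    by_cases hij : i = j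
    · exact hirr _ (hij ▸ h)
    · have := (hAG (.inr i) (.inr j)).1 (Or.inl h)
      simp [hij] at this
  -- key: in any push, two distinct right vertices cannot agree on both left vertices
  have key : ∀ (S : Set (Fin 2 ⊕ Fin 3)) (i j : Fin 3), i ≠ j →
      (push S A (.inr i) (.inl 0) ↔ push S A (.inr j) (.inl 0)) →
      (push S A (.inr i) (.inl 1) ↔ push S A (.inr j) (.inl 1)) → False := by
    intro S i j hij h0 h1
    set B := push S A with hB
    have hBor : IsOriented B := push_oriented' S ⟨hirr, hasym⟩
    have hBrr : ∀ a b : Fin 3, ¬ B (.inr a) (.inr b) := by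
      intro a b h
      by_cases hab : a = b
      · exact hBor.1 _ (hab ▸ h)
      · have := (push_adj' S A _ _).1 (Or.inl h)
        rw [hAG] at this
        simp [hab] at this
    rcases hpush S (.inr i) (.inr j) (by simp [hij]) with h | ⟨w, hw⟩
    · exact hBrr i j (h.resolve_right (hBrr j i))
    · rcases w with k | k
      · have hiff : B (.inr i) (.inl k) ↔ B (.inr j) (.inl k) := by
          rcases k with ⟨kv, hkv⟩
          interval_cases kv
          · exact h0
          · exact h1
        rcases hw with ⟨ha, hb⟩ | ⟨ha, hb⟩
        · exact hBor.2 _ _ (hiff.mp ha) hb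
        · exact hBor.2 _ _ (hiff.mpr ha) hb
      · rcases hw with ⟨ha, _⟩ | ⟨ha, _⟩
        · exact hBrr i k ha
        · exact hBrr j k ha
  -- Boolean type of each right vertex
  let b : Fin 3 → Fin 2 → Bool := fun i k => decide (A (.inr i) (.inl k))
  let g : Fin 3 → Bool := fun i => b i 0 == b i 1
  -- pigeonhole on g
  obtain ⟨i, j, hij, hg⟩ : ∃ i j : Fin 3, i ≠ j ∧ g i = g j := by
    by_cases h01 : g 0 = g 1
    · exact ⟨0, 1, by decide, h01⟩
    by_cases h02 : g 0 = g 2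
    · exact ⟨0, 2, by decide, h02⟩
    · exact ⟨1, 2, by decide, by
        rcases Bool.eq_false_or_eq_true (g 0) with h | h <;>
          rcases Bool.eq_false_or_eq_true (g 1) with h' | h' <;>
          rcases Bool.eq_false_or_eq_true (g 2) with h'' | h'' <;>
          simp_all⟩
  -- exactly one arc between adjacent vertices
  have honew : ∀ (x : Fin 3) (k : Fin 2), ¬ A (.inr x) (.inl k) ↔ A (.inl k) (.inr x) := by
    intro x k
    constructor
    · intro h; rcases hrl x k with h' | h'
      · exact absurd h' h
      · exact h'
    · intro h h'; exact hasym _ _ h' h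
  by_cases hsame : b i 0 = b j 0
  · -- same type: take S = ∅
    have hsame1 : b i 1 = b j 1 := by
      simp only [g, Bool.beq_eq_decide_eq] at hg
      rcases Bool.eq_false_or_eq_true (b i 0) with h | h <;>
        rcases Bool.eq_false_or_eq_true (b i 1) with h' | h' <;> simp_all
    have hemp : ∀ u v : Fin 2 ⊕ Fin 3, push (∅ : Set (Fin 2 ⊕ Fin 3)) A u v ↔ A u v := by
      intro u v; unfold push Xor'; simp
    apply key ∅ i j hij
    · rw [hemp, hemp]
      have : decide (A (.inr i) (.inl 0)) = decide (A (.inr j) (.inl 0)) := hsame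
      simpa using this
    · rw [hemp, hemp]
      have : decide (A (.inr i) (.inl 1)) = decide (A (.inr j) (.inl 1)) := hsame1
      simpa using this
  · -- opposite type: take S = {inr i}
    have hdiff1 : b i 1 ≠ b j 1 := by
      simp only [g, Bool.beq_eq_decide_eq] at hg
      rcases Bool.eq_false_or_eq_true (b i 0) with h | h <;>
        rcases Bool.eq_false_or_eq_true (b i 1) with h' | h' <;> simp_all
    have hd0 : A (.inr i) (.inl 0) ↔ ¬ A (.inr j) (.inl 0) := by
      have : decide (A (.inr i) (.inl 0)) ≠ decide (A (.inr j) (.inl 0)) := hsame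
      rcases Bool.eq_false_or_eq_true (decide (A (.inr i) (.inl 0))) with h | h <;>
        rcases Bool.eq_false_or_eq_true (decide (A (.inr j) (.inl 0))) with h' | h' <;>
        simp_all
    have hd1 : A (.inr i) (.inl 1) ↔ ¬ A (.inr j) (.inl 1) := by
      have : decide (A (.inr i) (.inl 1)) ≠ decide (A (.inr j) (.inl 1)) := hdiff1
      rcases Bool.eq_false_or_eq_true (decide (A (.inr i) (.inl 1))) with h | h <;>
        rcases Bool.eq_false_or_eq_true (decide (A (.inr j) (.inl 1))) with h' | h' <;>
        simp_all
    have hpi : ∀ k : Fin 2,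
        push ({Sum.inr i} : Set (Fin 2 ⊕ Fin 3)) A (.inr i) (.inl k) ↔ A (.inl k) (.inr i) := by
      intro k
      unfold push Xor'
      simp
    have hpj : ∀ k : Fin 2,
        push ({Sum.inr i} : Set (Fin 2 ⊕ Fin 3)) A (.inr j) (.inl k) ↔ A (.inr j) (.inl k) := by
      intro k
      unfold push Xor'
      simp [Ne.symm hij]
    clear hg hsame hdiff1 g b
    have X : ∀ k : Fin 2, (A (.inr i) (.inl k) ↔ ¬ A (.inr j) (.inl k)) →
        (A (.inl k) (.inr i) ↔ A (.inr j) (.inl k)) := by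
      intro k hd
      constructor
      · intro h
        by_contra h'
        exact hasym _ _ h (hd.mpr h')
      · intro h
        exact (honew i k).mp (fun hi => (hd.mp hi) h)
    have X0 := X 0 hd0
    have X1 := X 1 hd1
    exact key {Sum.inr i} i j hij ((hpi 0).trans (X0.trans (hpj 0).symm))
      ((hpi 1).trans (X1.trans (hpj 1).symm))
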